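/- Global support paraboloids from local lower support functions (Lemma 2.16). Let Ω ⊆ ℝⁿ be a convex open set, let v : Ω → ℝ be continuous, and let C ∈ ℝ. Assume v satisfies D²v ≥ −C·I in the sense of support functions: for every x ∈ Ω there is a C² lower support function φ for v at x with D²φ ≥ −C·I on a neighborhood of x. Then for each x₀ ∈ Ω there is a vector a ∈ ℝⁿ such that v(x) ≥ v(x₀) + ⟨x − x₀, a⟩ − (C/2)‖x − x₀‖² for all x ∈ Ω. Moreover, if v is differentiable at x₀ then a = Dv(x₀). -/

import Mathlib

open scoped RealInnerProductSpace

noncomputable section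

abbrev Euc (n : ℕ) := EuclideanSpace ℝ (Fin n)

/-- Second partial derivative `D_{ij}u`. -/
def pd2 (n : ℕ) (i j : Fin n) (u : Euc n → ℝ) (x : Euc n) : ℝ :=
  fderiv ℝ (fun y => fderiv ℝ u y (EuclideanSpace.single j 1)) x (EuclideanSpace.single i 1)

/-- Hessian matrix `D²u`. -/
def hessM (n : ℕ) (u : Euc n → ℝ) (x : Euc n) : Matrix (Fin n) (Fin n) ℝ :=
  Matrix.of fun i j => pd2 n i j u x

lemma euc_decomp (n : ℕ) (d : Euc n) : d = ∑ i, d i • EuclideanSpace.single i (1:ℝ) := by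
  have := (EuclideanSpace.basisFun (Fin n) ℝ).sum_repr d
  simpa [EuclideanSpace.basisFun_apply, EuclideanSpace.basisFun_repr] using this.symm

lemma euc_norm_sq (n : ℕ) (d : Euc n) : ‖d‖^2 = ∑ i, (d i)^2 := by
  rw [EuclideanSpace.norm_eq, Real.sq_sqrt (by positivity)]
  simp [sq_abs]

lemma pd2_eq (n : ℕ) (φ : Euc n → ℝ) (y : Euc n)
    (hd : DifferentiableAt ℝ (fderiv ℝ φ) y) (i j : Fin n) :
    pd2 n i j φ y = fderiv ℝ (fderiv ℝ φ) y (EuclideanSpace.single i 1)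
      (EuclideanSpace.single j 1) := by
  have h : HasFDerivAt (fun z => fderiv ℝ φ z (EuclideanSpace.single j (1:ℝ)))
      ((ContinuousLinearMap.apply ℝ ℝ (EuclideanSpace.single j (1:ℝ))).comp
        (fderiv ℝ (fderiv ℝ φ) y)) y :=
    (ContinuousLinearMap.apply ℝ ℝ (EuclideanSpace.single j (1:ℝ))).hasFDerivAt.comp y
      hd.hasFDerivAt
  rw [pd2, h.fderiv]
  rfl

lemma quad_eq (n : ℕ) (φ : Euc n → ℝ) (y : Euc n)
    (hd : DifferentiableAt ℝ (fderiv ℝ φ) y) (d : Euc n) :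
    fderiv ℝ (fderiv ℝ φ) y d d = ∑ i, ∑ j, d i * d j * pd2 n i j φ y := by
  have hdec := euc_decomp n d
  have key : fderiv ℝ (fderiv ℝ φ) y d d
      = ∑ i, ∑ j, d i * d j *
        (fderiv ℝ (fderiv ℝ φ) y (EuclideanSpace.single j 1) (EuclideanSpace.single i 1)) := by
    conv_lhs => rw [hdec]
    simp only [map_sum, map_smul, ContinuousLinearMap.sum_apply, ContinuousLinearMap.smul_apply,
      smul_eq_mul]
    refine Finset.sum_congr rfl fun i _ => ?_
    rw [Finset.mul_sum]
    refine Finset.sum_congr rfl fun j _ => ?_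
    ring
  rw [key, Finset.sum_comm]
  exact Finset.sum_congr rfl fun i _ => Finset.sum_congr rfl fun j _ => by
    rw [pd2_eq n φ y hd i j]; ring

lemma quad_bound (n : ℕ) (C : ℝ) (φ : Euc n → ℝ) (y : Euc n)
    (hd : DifferentiableAt ℝ (fderiv ℝ φ) y)
    (hpsd : (hessM n φ y + C • (1 : Matrix (Fin n) (Fin n) ℝ)).PosSemidef) (d : Euc n) :
    -(C * ‖d‖^2) ≤ fderiv ℝ (fderiv ℝ φ) y d d := by
  have h := hpsd.dotProduct_mulVec_nonneg (fun i => d i)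
  have hexp : dotProduct (star fun i => d i)
      (Matrix.mulVec (hessM n φ y + C • (1 : Matrix (Fin n) (Fin n) ℝ)) fun i => d i)
      = (∑ i, ∑ j, d i * d j * pd2 n i j φ y) + C * ∑ i, (d i)^2 := by
    simp only [dotProduct, Matrix.mulVec, star_trivial, Matrix.add_apply,
      Matrix.smul_apply, Matrix.one_apply, hessM, Matrix.of_apply, smul_eq_mul]
    have hrow : ∀ i, d i * (∑ j, (pd2 n i j φ y + C * (if i = j then (1:ℝ) else 0)) * d j)
        = (∑ j, d i * d j * pd2 n i j φ y) + C * (d i)^2 := by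
      intro i
      have hterm : ∀ j, d i * ((pd2 n i j φ y + C * (if i = j then (1:ℝ) else 0)) * d j)
          = d i * d j * pd2 n i j φ y + (if i = j then C * (d i * d j) else 0) := by
        intro j
        by_cases hij : i = j <;> simp [hij] <;> ring
      rw [Finset.mul_sum, Finset.sum_congr rfl (fun j _ => hterm j), Finset.sum_add_distrib,
        Finset.sum_ite_eq]
      simp [sq]
    rw [Finset.sum_congr rfl (fun i _ => hrow i), Finset.sum_add_distrib, ← Finset.mul_sum]
  rw [hexp, ← euc_norm_sq] at h
  rw [quad_eq n φ y hd d]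
  linarith

/-- Second-order lower support along a line, from a C² function with Hessian ≥ -C·I. -/
lemma line_support (n : ℕ) (C : ℝ) (φ : Euc n → ℝ) (N : Set (Euc n)) (hN : IsOpen N)
    (hφ : ContDiffOn ℝ 2 φ N)
    (hpsd : ∀ y ∈ N, (hessM n φ y + C • (1 : Matrix (Fin n) (Fin n) ℝ)).PosSemidef)
    (x₀ d : Euc n) (t : ℝ) (ht : x₀ + t • d ∈ N) :
    ∃ δ > 0, ∀ s : ℝ, |s - t| < δ → x₀ + s • d ∈ N ∧
      φ (x₀ + t • d) + C/2 * t^2 * ‖d‖^2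
        + (fderiv ℝ φ (x₀ + t • d) d + C * t * ‖d‖^2) * (s - t)
        ≤ φ (x₀ + s • d) + C/2 * s^2 * ‖d‖^2 := by
  set L : ℝ → Euc n := fun s => x₀ + s • d with hLdef
  have hLc : Continuous L := by fun_prop
  have hL : ∀ s : ℝ, HasDerivAt L d s := by
    intro s
    have : HasDerivAt (fun s : ℝ => s • d) ((1:ℝ) • d) s := (hasDerivAt_id s).smul_const d
    have h' := this.const_add x₀
    rw [one_smul] at h'
    exact h'
  -- regularity facts at points of N
  have hreg : ∀ y ∈ N, DifferentiableAt ℝ φ y ∧ DifferentiableAt ℝ (fderiv ℝ φ) y := by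
    intro y hy
    have hy2 : ContDiffAt ℝ 2 φ y := hφ.contDiffAt (hN.mem_nhds hy)
    refine ⟨hy2.differentiableAt (by norm_num), ?_⟩
    exact (hy2.fderiv_right (by norm_num : (1:WithTop ℕ∞) + 1 ≤ 2)).differentiableAt one_ne_zero
  -- the 1-D functions
  set ψ : ℝ → ℝ := fun s => φ (L s) + C/2 * s^2 * ‖d‖^2 with hψdef
  set ψ' : ℝ → ℝ := fun s => fderiv ℝ φ (L s) d + C * s * ‖d‖^2 with hψ'def
  have hψd : ∀ s : ℝ, L s ∈ N → HasDerivAt ψ (ψ' s) s := by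
    intro s hs
    have h1 : HasDerivAt (fun s => φ (L s)) (fderiv ℝ φ (L s) d) s :=
      (hreg _ hs).1.hasFDerivAt.comp_hasDerivAt s (hL s)
    have h2 : HasDerivAt (fun s : ℝ => C/2 * s^2 * ‖d‖^2) (C * s * ‖d‖^2) s := by
      have := ((hasDerivAt_pow 2 s).const_mul (C/2)).mul_const (‖d‖^2)
      refine this.congr_deriv ?_
      ring
    exact h1.add h2
  have hψ'd : ∀ s : ℝ, L s ∈ N →
      HasDerivAt ψ' (fderiv ℝ (fderiv ℝ φ) (L s) d d + C * ‖d‖^2) s := by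
    intro s hs
    have hF : HasFDerivAt (fun y => fderiv ℝ φ y d)
        ((ContinuousLinearMap.apply ℝ ℝ d).comp (fderiv ℝ (fderiv ℝ φ) (L s))) (L s) :=
      (ContinuousLinearMap.apply ℝ ℝ d).hasFDerivAt.comp (L s) (hreg _ hs).2.hasFDerivAt
    have h1 : HasDerivAt (fun s => fderiv ℝ φ (L s) d)
        (fderiv ℝ (fderiv ℝ φ) (L s) d d) s := by
      have := hF.comp_hasDerivAt s (hL s)
      exact this
    have h2 : HasDerivAt (fun s : ℝ => C * s * ‖d‖^2) (C * ‖d‖^2) s := by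
      have := ((hasDerivAt_id s).const_mul C).mul_const (‖d‖^2)
      refine this.congr_deriv ?_
      ring
    exact h1.add h2
  -- choose δ
  have hJ : IsOpen (L ⁻¹' N) := hN.preimage hLc
  have htJ : t ∈ L ⁻¹' N := ht
  obtain ⟨δ, hδ0, hball⟩ := Metric.isOpen_iff.1 hJ t htJ
  refine ⟨δ, hδ0, fun s hst => ?_⟩
  have hmem : ∀ r : ℝ, |r - t| < δ → L r ∈ N := by
    intro r hr
    exact hball (by rwa [Metric.mem_ball, Real.dist_eq])
  have hsN : L s ∈ N := hmem s hst
  refine ⟨hsN, ?_⟩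
  -- ψ' is monotone on I = Ioo (t-δ) (t+δ)
  set I : Set ℝ := Set.Ioo (t - δ) (t + δ) with hIdef
  have hI : ∀ r ∈ I, L r ∈ N := by
    intro r hr
    apply hmem
    rw [abs_sub_lt_iff]
    constructor <;> [linarith [hr.2]; linarith [hr.1]]
  have hmono : MonotoneOn ψ' I := by
    apply monotoneOn_of_deriv_nonneg (convex_Ioo _ _)
    · intro r hr
      exact (hψ'd r (hI r hr)).continuousAt.continuousWithinAt
    · intro r hr
      rw [interior_Ioo] at hr
      exact (hψ'd r (hI r hr)).differentiableAt.differentiableWithinAt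
    · intro r hr
      rw [interior_Ioo] at hr
      rw [(hψ'd r (hI r hr)).deriv]
      have := quad_bound n C φ (L r) (hreg _ (hI r hr)).2 (hpsd _ (hI r hr)) d
      linarith
  have htI : t ∈ I := by constructor <;> [linarith; linarith]
  have hsI : s ∈ I := by
    rw [abs_sub_lt_iff] at hst
    constructor <;> [linarith [hst.2]; linarith [hst.1]]
  -- tangent line inequality via MVT
  rcases lt_trichotomy s t with hlt | heq | hgt
  · obtain ⟨c, hc, hc2⟩ := exists_hasDerivAt_eq_slope ψ ψ' hlt
      (fun r hr => (hψd r (hI r ⟨lt_of_lt_of_le (by linarith [hsI.1]) hr.1,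
        lt_of_le_of_lt hr.2 (by linarith [htI.2])⟩)).continuousAt.continuousWithinAt)
      (fun r hr => hψd r (hI r ⟨by linarith [hsI.1, hr.1], by linarith [htI.2, hr.2]⟩))
    have hcI : c ∈ I := ⟨by linarith [hsI.1, hc.1], by linarith [htI.2, hc.2]⟩
    have hle : ψ' c ≤ ψ' t := hmono hcI htI (le_of_lt hc.2)
    have hslope : ψ t - ψ s = ψ' c * (t - s) :=
      (div_eq_iff (sub_ne_zero.2 (ne_of_gt hlt))).1 hc2.symm
    have : ψ t - ψ s ≤ ψ' t * (t - s) := by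
      rw [hslope]
      exact mul_le_mul_of_nonneg_right hle (by linarith)
    show ψ t + ψ' t * (s - t) ≤ ψ s
    nlinarith [this]
  · subst heq; simp
  · obtain ⟨c, hc, hc2⟩ := exists_hasDerivAt_eq_slope ψ ψ' hgt
      (fun r hr => (hψd r (hI r ⟨by linarith [htI.1, hr.1], by linarith [hsI.2, hr.2]⟩)).continuousAt.continuousWithinAt)
      (fun r hr => hψd r (hI r ⟨by linarith [htI.1, hr.1], by linarith [hsI.2, hr.2]⟩))
    have hcI : c ∈ I := ⟨by linarith [htI.1, hc.1], by linarith [hsI.2, hc.2]⟩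
    have hle : ψ' t ≤ ψ' c := hmono htI hcI (le_of_lt hc.1)
    have hslope : ψ s - ψ t = ψ' c * (s - t) :=
      (div_eq_iff (sub_ne_zero.2 (ne_of_gt hgt))).1 hc2.symm
    show ψ t + ψ' t * (s - t) ≤ ψ s
    nlinarith [hslope, mul_le_mul_of_nonneg_right hle (show (0:ℝ) ≤ s - t by linarith)]

open Set in
lemma max_principle (h : ℝ → ℝ) (hc : ContinuousOn h (Icc 0 1))
    (h0 : h 0 = 0) (h1 : h 1 = 0)
    (hs : ∀ t ∈ Icc (0:ℝ) 1, ∃ m δ, 0 < δ ∧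
      ∀ s ∈ Icc (0:ℝ) 1, |s - t| < δ → h t + m * (s - t) ≤ h s) :
    ∀ t ∈ Icc (0:ℝ) 1, h t ≤ 0 := by
  by_contra hcon
  push_neg at hcon
  obtain ⟨t₀, ht₀, ht₀pos⟩ := hcon
  obtain ⟨u, hu, hmax⟩ := isCompact_Icc.exists_isMaxOn (⟨0, by norm_num⟩ : (Icc (0:ℝ) 1).Nonempty) hc
  set M := h u with hM
  have hMpos : 0 < M := lt_of_lt_of_le ht₀pos (hmax ht₀)
  set K : Set ℝ := Icc 0 1 ∩ h ⁻¹' {M} with hK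
  have hKclosed : IsClosed K := hc.preimage_isClosed_of_isClosed isClosed_Icc isClosed_singleton
  have hKne : K.Nonempty := ⟨u, hu, rfl⟩
  have hKbdd : BddAbove K := BddAbove.mono (inter_subset_left) bddAbove_Icc
  set T := sSup K with hT
  have hTK : T ∈ K := hKclosed.csSup_mem hKne hKbdd
  have hTIcc : T ∈ Icc (0:ℝ) 1 := hTK.1
  have hTM : h T = M := hTK.2
  have hT0 : T ≠ 0 := fun hh => by rw [hh, h0] at hTM; linarith
  have hT1 : T ≠ 1 := fun hh => by rw [hh, h1] at hTM; linarith
  have hT0' : 0 < T := lt_of_le_of_ne hTIcc.1 (Ne.symm hT0)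
  have hT1' : T < 1 := lt_of_le_of_ne hTIcc.2 hT1
  obtain ⟨m, δ, hδ, hsupp⟩ := hs T hTIcc
  rcases le_or_gt 0 m with hm | hm
  · -- move right
    set s := T + min (δ/2) ((1 - T)/2) with hs'
    have he : 0 < min (δ/2) ((1 - T)/2) := lt_min (by linarith) (by linarith)
    have hsIcc : s ∈ Icc (0:ℝ) 1 := by
      constructor
      · have := min_le_right (δ/2) ((1-T)/2); simp only [hs']; linarith [hTIcc.1]
      · have := min_le_right (δ/2) ((1-T)/2); simp only [hs']; linarith
    have hdist : |s - T| < δ := by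
      rw [hs', add_sub_cancel_left, abs_of_pos he]
      calc min (δ/2) ((1-T)/2) ≤ δ/2 := min_le_left _ _
        _ < δ := by linarith
    have hle := hsupp s hsIcc hdist
    have hhs : M ≤ h s := by
      have : (0:ℝ) ≤ m * (s - T) := mul_nonneg hm (by rw [hs']; linarith)
      rw [hTM] at hle; linarith
    have hsK : s ∈ K := ⟨hsIcc, le_antisymm (hmax hsIcc) hhs⟩
    have : s ≤ T := le_csSup hKbdd hsK
    rw [hs'] at this; linarith
  · -- move left
    set s := T - min (δ/2) (T/2) with hs'
    have he : 0 < min (δ/2) (T/2) := lt_min (by linarith) (by linarith)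
    have hsIcc : s ∈ Icc (0:ℝ) 1 := by
      constructor
      · have := min_le_right (δ/2) (T/2); simp only [hs']; linarith
      · have := min_le_right (δ/2) (T/2); simp only [hs']; linarith [hTIcc.2]
    have hdist : |s - T| < δ := by
      rw [hs']
      rw [show T - min (δ/2) (T/2) - T = -(min (δ/2) (T/2)) by ring, abs_neg, abs_of_pos he]
      calc min (δ/2) (T/2) ≤ δ/2 := min_le_left _ _
        _ < δ := by linarith
    have hle := hsupp s hsIcc hdist
    have : M < h s := by
      have hneg : s - T < 0 := by rw [hs']; linarith
      have : 0 < m * (s - T) := mul_pos_of_neg_of_neg hm hneg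
      rw [hTM] at hle; linarith
    have h2 : h s ≤ M := hmax hsIcc
    linarith

open Set in
/-- Lemma 2.16: global support paraboloids from local lower support functions. -/
theorem global_support_paraboloid
    (n : ℕ) (Ω : Set (Euc n)) (hΩopen : IsOpen Ω) (hΩconv : Convex ℝ Ω)
    (v : Euc n → ℝ) (hv : ContinuousOn v Ω) (C : ℝ)
    (hsupp : ∀ x ∈ Ω, ∃ (φ : Euc n → ℝ) (N : Set (Euc n)),
      IsOpen N ∧ x ∈ N ∧ ContDiffOn ℝ 2 φ N ∧ φ x = v x ∧
      (∀ y ∈ N ∩ Ω, φ y ≤ v y) ∧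
      (∀ y ∈ N, (hessM n φ y + C • (1 : Matrix (Fin n) (Fin n) ℝ)).PosSemidef)) :
    ∀ x₀ ∈ Ω, ∃ a : Euc n,
      (∀ x ∈ Ω, v x₀ + ⟪x - x₀, a⟫ - C / 2 * ‖x - x₀‖ ^ 2 ≤ v x) ∧
      (DifferentiableAt ℝ v x₀ → a = gradient v x₀) := by
  intro x₀ hx₀
  obtain ⟨φ₀, N₀, hN₀, hx₀N, hφ₀, hval₀, hle₀, hpsd₀⟩ := hsupp x₀ hx₀
  refine ⟨gradient φ₀ x₀, ?_, ?_⟩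
  · -- the global paraboloid inequality
    intro x hx
    set d : Euc n := x - x₀ with hd
    set L : ℝ → Euc n := fun s => x₀ + s • d with hLdef
    have hL0 : L 0 = x₀ := by simp [hLdef]
    have hL1 : L 1 = x := by simp [hLdef, hd]
    have hLΩ : ∀ s ∈ Icc (0:ℝ) 1, L s ∈ Ω := by
      intro s hsc
      have hmem : (1 - s) • x₀ + s • x ∈ Ω :=
        hΩconv hx₀ hx (by linarith [hsc.2]) hsc.1 (by ring)
      have : L s = (1 - s) • x₀ + s • x := by
        simp only [hLdef, hd, smul_sub, sub_smul, one_smul]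
        abel
      rwa [this]
    set g : ℝ → ℝ := fun s => v (L s) + C/2 * s^2 * ‖d‖^2 with hgdef
    set hfun : ℝ → ℝ := fun s => g s - ((1 - s) * g 0 + s * g 1) with hfdef
    have hLcont : Continuous L := by fun_prop
    have hgcont : ContinuousOn g (Icc 0 1) := by
      apply ContinuousOn.add
      · exact hv.comp hLcont.continuousOn hLΩ
      · fun_prop
    have hfcont : ContinuousOn hfun (Icc 0 1) := by
      apply hgcont.sub
      fun_prop
    have hf0 : hfun 0 = 0 := by simp [hfdef]
    have hf1 : hfun 1 = 0 := by simp [hfdef]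
    -- local affine lower support for hfun at every point of [0,1]
    have hfsupp : ∀ t ∈ Icc (0:ℝ) 1, ∃ m δ, 0 < δ ∧
        ∀ s ∈ Icc (0:ℝ) 1, |s - t| < δ → hfun t + m * (s - t) ≤ hfun s := by
      intro t ht
      obtain ⟨φ, N, hN, htN, hφ, hval, hle, hpsd⟩ := hsupp (L t) (hLΩ t ht)
      obtain ⟨δ, hδ, hψ⟩ := line_support n C φ N hN hφ hpsd x₀ d t htN
      refine ⟨fderiv ℝ φ (x₀ + t • d) d + C * t * ‖d‖^2 - (g 1 - g 0), δ, hδ, ?_⟩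
      intro s hsIcc hdist
      obtain ⟨hsN, hineq⟩ := hψ s hdist
      have hgt : g t = φ (x₀ + t • d) + C/2 * t^2 * ‖d‖^2 := by
        simp only [hgdef, hLdef]
        rw [hval]
      have hgs : φ (x₀ + s • d) + C/2 * s^2 * ‖d‖^2 ≤ g s := by
        simp only [hgdef, hLdef]
        have := hle (x₀ + s • d) ⟨hsN, hLΩ s hsIcc⟩
        linarith
      have hg : g t + (fderiv ℝ φ (x₀ + t • d) d + C * t * ‖d‖^2) * (s - t) ≤ g s := by
        rw [hgt]; linarith
      simp only [hfdef]
      nlinarith [hg]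
    have hneg := max_principle hfun hfcont hf0 hf1 hfsupp
    -- support at t = 0 with the distinguished φ₀
    have h0N : x₀ + (0:ℝ) • d ∈ N₀ := by simpa using hx₀N
    obtain ⟨δ₀, hδ₀, hψ₀⟩ := line_support n C φ₀ N₀ hN₀ hφ₀ hpsd₀ x₀ d 0 h0N
    set t₁ : ℝ := min (δ₀/2) 1 with ht₁
    have ht₁pos : 0 < t₁ := lt_min (by linarith) one_pos
    have ht₁le : t₁ ≤ 1 := min_le_right _ _
    have ht₁Icc : t₁ ∈ Icc (0:ℝ) 1 := ⟨le_of_lt ht₁pos, ht₁le⟩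
    have hdist : |t₁ - 0| < δ₀ := by
      rw [sub_zero, abs_of_pos ht₁pos]
      calc t₁ ≤ δ₀/2 := min_le_left _ _
        _ < δ₀ := by linarith
    obtain ⟨ht₁N, hineq₀⟩ := hψ₀ t₁ hdist
    -- rewrite the support inequality at 0
    have h00 : x₀ + (0:ℝ) • d = x₀ := by simp
    rw [h00] at hineq₀
    have hψt₁ : φ₀ (x₀ + t₁ • d) + C/2 * t₁^2 * ‖d‖^2 ≤ g t₁ := by
      simp only [hgdef, hLdef]
      have := hle₀ (x₀ + t₁ • d) ⟨ht₁N, hLΩ t₁ ht₁Icc⟩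
      linarith
    have hg0 : g 0 = v x₀ := by simp [hgdef, hL0]
    have hg1 : g 1 = v x + C/2 * ‖d‖^2 := by
      simp only [hgdef, hL1]
      ring
    have hfun_t₁ := hneg t₁ ht₁Icc
    have hkey : fderiv ℝ φ₀ x₀ d ≤ g 1 - g 0 := by
      have e1 : v x₀ + (fderiv ℝ φ₀ x₀ d) * t₁ ≤ g t₁ := by
        have h1 : φ₀ x₀ + C/2 * 0^2 * ‖d‖^2
            + (fderiv ℝ φ₀ x₀ d + C * 0 * ‖d‖^2) * (t₁ - 0)
            ≤ φ₀ (x₀ + t₁ • d) + C/2 * t₁^2 * ‖d‖^2 := hineq₀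
        rw [hval₀] at h1
        have h2 : v x₀ + C/2 * 0^2 * ‖d‖^2
            + (fderiv ℝ φ₀ x₀ d + C * 0 * ‖d‖^2) * (t₁ - 0)
            = v x₀ + (fderiv ℝ φ₀ x₀ d) * t₁ := by ring
        rw [h2] at h1
        exact le_trans h1 hψt₁
      have e2 : g t₁ ≤ (1 - t₁) * g 0 + t₁ * g 1 := by
        have h3 : hfun t₁ = g t₁ - ((1 - t₁) * g 0 + t₁ * g 1) := rfl
        rw [h3] at hfun_t₁
        linarith
      rw [hg0] at e2
      clear_value t₁
      have e3 : (fderiv ℝ φ₀ x₀ d) * t₁ ≤ (g 1 - g 0) * t₁ := by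
        rw [hg0]
        linarith [e1, e2]
      exact le_of_mul_le_mul_right e3 ht₁pos
    have hinner : ⟪x - x₀, gradient φ₀ x₀⟫ = fderiv ℝ φ₀ x₀ d := by
      rw [← hd, real_inner_comm]
      exact InnerProductSpace.toDual_symm_apply
    rw [hinner]
    rw [hg1, hg0] at hkey
    linarith
  · -- identification of the gradient when v is differentiable
    intro hvd
    have hφd : DifferentiableAt ℝ φ₀ x₀ :=
      (hφ₀.contDiffAt (hN₀.mem_nhds hx₀N)).differentiableAt (by norm_num)
    have hmin : IsLocalMin (fun y => v y - φ₀ y) x₀ := by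
      filter_upwards [(hN₀.inter hΩopen).mem_nhds ⟨hx₀N, hx₀⟩] with y hy
      have h1 : φ₀ y ≤ v y := hle₀ y hy
      have h2 : v x₀ - φ₀ x₀ = 0 := by rw [hval₀]; ring
      rw [h2]
      linarith
    have hzero := hmin.fderiv_eq_zero
    have hsub : fderiv ℝ (fun y => v y - φ₀ y) x₀ = fderiv ℝ v x₀ - fderiv ℝ φ₀ x₀ :=
      fderiv_sub hvd hφd
    have heq : fderiv ℝ φ₀ x₀ = fderiv ℝ v x₀ := by
      rw [hsub] at hzero
      have := sub_eq_zero.1 hzero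
      exact this.symm
    unfold gradient
    rw [heq]

end
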